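/- If G is an almost monomial finite group and N is a normal subgroup of G, then the quotient group G/N is almost monomial. -/

import Mathlib

open scoped Classical

noncomputable section

/-- The usual inner product of complex-valued class functions on a finite group. -/
def charInner (G : Type) [Group G] [Finite G] (χ φ : G → ℂ) : ℂ :=
  (Nat.card G : ℂ)⁻¹ * ∑ᶠ g : G, χ g * (starRingEnd ℂ) (φ g)

/-- `χ` is an irreducible complex character of `G`, i.e. the character of a simple
finite-dimensional complex representation of `G`. -/
def IsIrreducibleChar (G : Type) [Group G] (χ : G → ℂ) : Prop :=
  ∃ V : FDRep ℂ G, CategoryTheory.Simple V ∧ χ = V.character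

/-- The character of `G` induced by a function `θ` on a subgroup `H ≤ G`:
`θ^G(g) = |H|⁻¹ ∑_{x ∈ G} θ⁰(x g x⁻¹)`. -/
def indChar {G : Type} [Group G] [Finite G] (H : Subgroup G) (θ : H → ℂ) : G → ℂ :=
  fun g => (Nat.card H : ℂ)⁻¹ *
    ∑ᶠ x : G, if h : x * g * x⁻¹ ∈ H then θ ⟨x * g * x⁻¹, h⟩ else 0

/-- `χ` is a constituent of `ψ`, i.e. `⟨ψ, χ⟩ ≠ 0` (for genuine characters this inner
product is a nonnegative integer, so this says `⟨ψ, χ⟩ > 0`). -/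
def IsConstituent (G : Type) [Group G] [Finite G] (ψ χ : G → ℂ) : Prop :=
  charInner G ψ χ ≠ 0

/-- A character `χ` of `G` is monomial if it is induced by a linear character (that is,
a monoid homomorphism to `ℂ`) of some subgroup `H ≤ G`. -/
def IsMonomialChar {G : Type} [Group G] [Finite G] (χ : G → ℂ) : Prop :=
  ∃ (H : Subgroup G) (lam : H →* ℂ), indChar H ⇑lam = χ

/-- A character `χ` of `G` is quasi-monomial if `λ^G = d·χ` for a linear character `λ` of
some subgroup `H ≤ G` and some positive integer `d`. -/
def IsQuasiMonomialChar {G : Type} [Group G] [Finite G] (χ : G → ℂ) : Prop :=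
  ∃ (H : Subgroup G) (lam : H →* ℂ) (d : ℕ), 0 < d ∧
    indChar H ⇑lam = fun g => (d : ℂ) * χ g

/-- A finite group is monomial if all its irreducible characters are monomial. -/
def IsMonomialGroup (G : Type) [Group G] [Finite G] : Prop :=
  ∀ χ : G → ℂ, IsIrreducibleChar G χ → IsMonomialChar χ

/-- A finite group is quasi-monomial if all its irreducible characters are quasi-monomial. -/
def IsQuasiMonomialGroup (G : Type) [Group G] [Finite G] : Prop :=
  ∀ χ : G → ℂ, IsIrreducibleChar G χ → IsQuasiMonomialChar χ

/-- A finite group `G` is almost monomial if for any two distinct irreducible characters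
`χ ≠ φ` of `G` there are a subgroup `H ≤ G` and a linear character `λ` of `H` such that
`χ` is a constituent of `λ^G` and `φ` is not. -/
def IsAlmostMonomialGroup (G : Type) [Group G] [Finite G] : Prop :=
  ∀ χ φ : G → ℂ, IsIrreducibleChar G χ → IsIrreducibleChar G φ → χ ≠ φ →
    ∃ (H : Subgroup G) (lam : H →* ℂ),
      IsConstituent G (indChar H ⇑lam) χ ∧ ¬ IsConstituent G (indChar H ⇑lam) φ


open CategoryTheory

section AuxCharacter

lemma sum_dite_subtype {α : Type} [Fintype α] (p : α → Prop) (F : Subtype p → ℂ) :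
    ∑ a : α, (if h : p a then F ⟨a, h⟩ else 0) = ∑ x : Subtype p, F x := by
  classical
  calc ∑ a : α, (if h : p a then F ⟨a, h⟩ else 0)
      = ∑ a ∈ Finset.univ.filter p, (if h : p a then F ⟨a, h⟩ else 0) := by
        refine (Finset.sum_subset (Finset.filter_subset p Finset.univ) ?_).symm
        intro a _ ha
        rw [Finset.mem_filter] at ha
        exact dif_neg (by tauto)
    _ = ∑ x : Subtype p, (if h : p ↑x then F ⟨↑x, h⟩ else 0) :=
        Finset.sum_subtype _ (by simp) _
    _ = ∑ x : Subtype p, F x := by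
        refine Finset.sum_congr rfl fun x _ => ?_
        rw [dif_pos x.2]

lemma sum_dite_mul {α : Type} [Fintype α] (p : α → Prop) (θ : Subtype p → ℂ) (c : α → ℂ) :
    ∑ a : α, (if h : p a then θ ⟨a, h⟩ else 0) * c a = ∑ x : Subtype p, θ x * c ↑x := by
  simp only [dite_mul, zero_mul]
  exact sum_dite_subtype p (fun x => θ x * c ↑x)

lemma frobenius_ind {G : Type} [Group G] [Finite G] (H : Subgroup G) (θ : H → ℂ) (f : G → ℂ)
    (hf : ∀ x g : G, f (x * g * x⁻¹) = f g) :
    charInner G (indChar H θ) f = charInner H θ (fun h : H => f ↑h) := by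
  have : Fintype G := Fintype.ofFinite G
  have hG0 : (Nat.card G : ℂ) ≠ 0 := Nat.cast_ne_zero.mpr Nat.card_pos.ne'
  have hH0 : (Nat.card H : ℂ) ≠ 0 := Nat.cast_ne_zero.mpr Nat.card_pos.ne'
  unfold charInner indChar
  simp only [finsum_eq_sum_of_fintype]
  have key : ∑ g : G, ((Nat.card H : ℂ)⁻¹ *
        ∑ x : G, (if h : x * g * x⁻¹ ∈ H then θ ⟨x * g * x⁻¹, h⟩ else 0)) *
          (starRingEnd ℂ) (f g)
      = (Nat.card H : ℂ)⁻¹ * ((Nat.card G : ℂ) *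
        ∑ g : G, (if h : g ∈ H then θ ⟨g, h⟩ else 0) * (starRingEnd ℂ) (f g)) := by
    calc ∑ g : G, ((Nat.card H : ℂ)⁻¹ *
            ∑ x : G, (if h : x * g * x⁻¹ ∈ H then θ ⟨x * g * x⁻¹, h⟩ else 0)) *
              (starRingEnd ℂ) (f g)
        = (Nat.card H : ℂ)⁻¹ * ∑ g : G,
            (∑ x : G, (if h : x * g * x⁻¹ ∈ H then θ ⟨x * g * x⁻¹, h⟩ else 0)) *
              (starRingEnd ℂ) (f g) := by
          rw [Finset.mul_sum]
          exact Finset.sum_congr rfl fun g _ => (mul_assoc _ _ _)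
      _ = (Nat.card H : ℂ)⁻¹ * ∑ g : G, ∑ x : G,
            (if h : x * g * x⁻¹ ∈ H then θ ⟨x * g * x⁻¹, h⟩ else 0) *
              (starRingEnd ℂ) (f g) := by
          congr 1
          exact Finset.sum_congr rfl fun g _ => Finset.sum_mul _ _ _
      _ = (Nat.card H : ℂ)⁻¹ * ∑ x : G, ∑ g : G,
            (if h : x * g * x⁻¹ ∈ H then θ ⟨x * g * x⁻¹, h⟩ else 0) *
              (starRingEnd ℂ) (f g) := by rw [Finset.sum_comm]
      _ = (Nat.card H : ℂ)⁻¹ * ∑ _x : G, ∑ g : G,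
            (if h : g ∈ H then θ ⟨g, h⟩ else 0) * (starRingEnd ℂ) (f g) := by
          congr 1
          refine Finset.sum_congr rfl fun x _ => ?_
          refine Fintype.sum_equiv (MulAut.conj x).toEquiv _ _ fun g => ?_
          simp only [MulAut.conj_apply, MulEquiv.toEquiv_eq_coe, EquivLike.coe_coe]
          rw [hf x g]
          rfl
      _ = (Nat.card H : ℂ)⁻¹ * ((Nat.card G : ℂ) *
            ∑ g : G, (if h : g ∈ H then θ ⟨g, h⟩ else 0) * (starRingEnd ℂ) (f g)) := by
          simp [Finset.sum_const, Finset.card_univ, nsmul_eq_mul, Nat.card_eq_fintype_card]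
  rw [key, sum_dite_mul (· ∈ H) θ fun g => (starRingEnd ℂ) (f g)]
  field_simp

lemma charInner_comp_surj {A B : Type} [Group A] [Group B] [Finite A] [Finite B]
    (p : A →* B) (hp : Function.Surjective p) (u v : B → ℂ) :
    charInner A (fun a => u (p a)) (fun a => v (p a)) = charInner B u v := by
  have : Fintype A := Fintype.ofFinite A
  have : Fintype B := Fintype.ofFinite B
  classical
  have hK0 : (Nat.card p.ker : ℂ) ≠ 0 := Nat.cast_ne_zero.mpr Nat.card_pos.ne'
  have hB0 : (Nat.card B : ℂ) ≠ 0 := Nat.cast_ne_zero.mpr Nat.card_pos.ne'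
  have hcardfib : ∀ b : B, (Finset.univ.filter (fun a => p a = b)).card = Nat.card p.ker := by
    intro b
    obtain ⟨a0, rfl⟩ := hp b
    have e : {a : A // p a = p a0} ≃ p.ker :=
      { toFun := fun a => ⟨a0⁻¹ * ↑a, by
          rw [MonoidHom.mem_ker, map_mul, map_inv, a.2, inv_mul_cancel]⟩
        invFun := fun k => ⟨a0 * ↑k, by
          rw [map_mul, show p ↑k = 1 from k.2, mul_one]⟩
        left_inv := fun a => by ext; simp
        right_inv := fun k => by ext; simp }
    rw [← Fintype.card_subtype, ← Nat.card_eq_fintype_card, Nat.card_congr e]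
  have hcards : (Nat.card A : ℂ) = (Nat.card p.ker : ℂ) * (Nat.card B : ℂ) := by
    have h1 : Nat.card A = Nat.card (A ⧸ p.ker) * Nat.card p.ker :=
      Subgroup.card_eq_card_quotient_mul_card_subgroup p.ker
    have h2 : Nat.card (A ⧸ p.ker) = Nat.card B :=
      Nat.card_congr (QuotientGroup.quotientKerEquivOfSurjective p hp).toEquiv
    rw [h1, h2]; push_cast; ring
  have key : ∑ a : A, u (p a) * (starRingEnd ℂ) (v (p a))
      = (Nat.card p.ker : ℂ) * ∑ b : B, u b * (starRingEnd ℂ) (v b) := by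
    rw [← Finset.sum_fiberwise Finset.univ (fun a => p a)
      (fun a => u (p a) * (starRingEnd ℂ) (v (p a)))]
    rw [Finset.mul_sum]
    refine Finset.sum_congr rfl fun b _ => ?_
    have : ∀ a ∈ Finset.univ.filter (fun a => p a = b),
        u (p a) * (starRingEnd ℂ) (v (p a)) = u b * (starRingEnd ℂ) (v b) := by
      intro a ha
      rw [Finset.mem_filter] at ha
      rw [ha.2]
    rw [Finset.sum_congr rfl this, Finset.sum_const, hcardfib b, nsmul_eq_mul]
  have gen : ∀ x y S : ℂ, x ≠ 0 → y ≠ 0 → (x * y)⁻¹ * (x * S) = y⁻¹ * S := by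
    intros x y S hx hy
    field_simp
  unfold charInner
  simp only [finsum_eq_sum_of_fintype]
  rw [key, hcards]
  exact gen _ _ _ hK0 hB0

lemma charInner_hom_eq_zero {A : Type} [Group A] [Finite A] (lam : A →* ℂ) (f : A → ℂ)
    (k0 : A) (h1 : lam k0 ≠ 1) (h2 : ∀ a, f (a * k0) = f a) :
    charInner A (⇑lam) f = 0 := by
  have : Fintype A := Fintype.ofFinite A
  unfold charInner
  simp only [finsum_eq_sum_of_fintype]
  have key : ∑ a : A, lam a * (starRingEnd ℂ) (f a)
      = lam k0 * ∑ a : A, lam a * (starRingEnd ℂ) (f a) := by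
    conv_lhs => rw [← Fintype.sum_equiv (Equiv.mulRight k0)
      (fun a => lam (a * k0) * (starRingEnd ℂ) (f (a * k0)))
      (fun a => lam a * (starRingEnd ℂ) (f a)) (fun a => rfl)]
    rw [Finset.mul_sum]
    refine Finset.sum_congr rfl fun a _ => ?_
    rw [h2, map_mul]
    ring
  have : ∑ a : A, lam a * (starRingEnd ℂ) (f a) = 0 := by
    have h0 := sub_eq_zero.mpr key.symm
    have h3 : (lam k0 - 1) * ∑ a : A, lam a * (starRingEnd ℂ) (f a) = 0 := by
      rw [sub_mul, one_mul]
      exact h0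
    rcases mul_eq_zero.mp h3 with h | h
    · exact absurd (sub_eq_zero.mp h) h1
    · exact h
  rw [this, mul_zero]

lemma exists_descend {A B : Type} [Group A] [Group B] (p : A →* B)
    (hp : Function.Surjective p) (lam : A →* ℂ) (hlam : ∀ a : A, p a = 1 → lam a = 1) :
    ∃ lam' : B →* ℂ, ∀ a, lam' (p a) = lam a := by
  have key : ∀ a1 a2 : A, p a1 = p a2 → lam a1 = lam a2 := by
    intro a1 a2 hh
    have h0 : lam (a1⁻¹ * a2) = 1 := hlam _ (by rw [map_mul, map_inv, hh, inv_mul_cancel])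
    calc lam a1 = lam a1 * lam (a1⁻¹ * a2) := by rw [h0, mul_one]
      _ = lam a2 := by rw [← map_mul, mul_inv_cancel_left]
  choose s hs using hp
  refine ⟨{ toFun := fun b => lam (s b), map_one' := ?_, map_mul' := ?_ }, ?_⟩
  · show lam (s 1) = 1
    rw [key (s 1) 1 (by rw [hs, map_one]), map_one]
  · intro b c
    show lam (s (b * c)) = lam (s b) * lam (s c)
    rw [← map_mul]
    exact key _ _ (by rw [map_mul, hs, hs, hs])
  · intro a
    exact key _ _ (hs _)

section SubRep
variable {B : Type} [Group B]

def subRep (X : FDRep ℂ B) (U : Submodule ℂ X) (hU : ∀ g : B, ∀ u ∈ U, X.ρ g u ∈ U) :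
    FDRep ℂ B :=
  FDRep.of (V := U)
    { toFun := fun g => (X.ρ g).restrict (fun u hu => hU g u hu)
      map_one' := by ext u; simp [LinearMap.restrict_apply]
      map_mul' := fun g h => by ext u; simp [LinearMap.restrict_apply] }

def subRepHom (X : FDRep ℂ B) (U : Submodule ℂ X) (hU : ∀ g : B, ∀ u ∈ U, X.ρ g u ∈ U) :
    subRep X U hU ⟶ X where
  hom := FGModuleCat.ofHom U.subtype
  comm := fun g => by ext u; rfl

lemma subRepHom_mono (X : FDRep ℂ B) (U : Submodule ℂ X)
    (hU : ∀ g : B, ∀ u ∈ U, X.ρ g u ∈ U) : Mono (subRepHom X U hU) := by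
  apply (Action.forget (FGModuleCat ℂ) (MonCat.of B)).mono_of_mono_map
  exact ConcreteCategory.mono_of_injective _ (fun a b h => Subtype.ext h)

lemma subRep_zero_hom_eq {X : FDRep ℂ B} {U : Submodule ℂ X}
    {hU : ∀ g : B, ∀ u ∈ U, X.ρ g u ∈ U} (h : subRepHom X U hU = 0) : U = ⊥ := by
  rw [Submodule.eq_bot_iff]
  intro x hx
  have : (subRepHom X U hU).hom.hom.hom ⟨x, hx⟩ = x := rfl
  rw [h] at this
  rw [← this]
  rw [Action.zero_hom]
  rfl

lemma simple_comp {A : Type} [Group A] (p : A →* B)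
    (hp : Function.Surjective p) (V : FDRep ℂ B) (hV : Simple V) :
    Simple (FDRep.of (V.ρ.comp p)) := by
  set W : FDRep ℂ A := FDRep.of (V.ρ.comp p) with hW
  constructor
  intro Y f m
  constructor
  · intro hiso h0
    obtain ⟨g, _, hgf⟩ := hiso.out
    have h1 : 𝟙 W = 0 := by rw [← hgf, h0, Limits.comp_zero]
    have e2 : Action.Hom.hom (𝟙 W) = (0 : W.V ⟶ W.V) := by rw [h1, Action.zero_hom]
    have h3 : 𝟙 V = (0 : V ⟶ V) := by
      apply Action.hom_ext
      rw [Action.id_hom, Action.zero_hom]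
      rw [Action.id_hom] at e2
      exact e2
    exact (id_nonzero V) h3
  · intro hne
    set φ : Y →ₗ[ℂ] V := f.hom.hom.hom with hφ
    have hfhom : φ ≠ 0 := fun hh => hne (Action.hom_ext _ _ (FGModuleCat.hom_ext (by rw [Action.zero_hom]; exact hh)))
    have hcomm : ∀ (a : A) (y : Y), φ (Y.ρ a y) = V.ρ (p a) (φ y) := by
      intro a y
      exact LinearMap.congr_fun (congrArg (fun k => k.hom.hom) (f.comm a)) y
    have hUinv : ∀ b : B, ∀ u ∈ LinearMap.range φ, V.ρ b u ∈ LinearMap.range φ := by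
      intro b u hu
      obtain ⟨a, rfl⟩ := hp b
      obtain ⟨y, rfl⟩ := hu
      exact ⟨Y.ρ a y, hcomm a y⟩
    have hmono2 := subRepHom_mono V (LinearMap.range φ) hUinv
    have hne' : subRepHom V (LinearMap.range φ) hUinv ≠ 0 := by
      intro hh
      exact hfhom (LinearMap.range_eq_bot.mp (subRep_zero_hom_eq hh))
    have hiso2 : IsIso (subRepHom V (LinearMap.range φ) hUinv) :=
      (hV.mono_isIso_iff_nonzero _).mpr hne'
    have hsurj : Function.Surjective φ := by
      intro x
      obtain ⟨j, hj1, hj2⟩ := hiso2.out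
      have h5 := congrArg Action.Hom.hom hj2
      rw [Action.comp_hom, Action.id_hom] at h5
      have h6 : (subRepHom V (LinearMap.range φ) hUinv).hom.hom.hom (j.hom.hom.hom x) = x :=
        LinearMap.congr_fun (congrArg (fun k => k.hom.hom) h5) x
      obtain ⟨y, hy⟩ := (j.hom.hom.hom x).2
      exact ⟨y, hy.trans h6⟩
    have hKinv : ∀ a : A, ∀ y ∈ LinearMap.ker φ, Y.ρ a y ∈ LinearMap.ker φ := by
      intro a y hy
      rw [LinearMap.mem_ker] at hy ⊢
      rw [hcomm a y, hy, map_zero]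
    have hκ : subRepHom Y (LinearMap.ker φ) hKinv ≫ f = 0 ≫ f := by
      rw [Limits.zero_comp]
      apply Action.hom_ext
      rw [Action.comp_hom, Action.zero_hom]
      ext u
      exact u.2
    have hκ0 : subRepHom Y (LinearMap.ker φ) hKinv = 0 := by
      haveI := hmono2
      exact (cancel_mono f).mp hκ
    have hinj : Function.Injective φ :=
      LinearMap.ker_eq_bot.mp (subRep_zero_hom_eq hκ0)
    let e := LinearEquiv.ofBijective φ ⟨hinj, hsurj⟩
    have hcomm2 : ∀ a : MonCat.of A, Action.ρ Y a ≫ (e.toFGModuleCatIso : Y.V ≅ W.V).hom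
        = (e.toFGModuleCatIso : Y.V ≅ W.V).hom ≫ Action.ρ W a := by
      intro a
      ext y
      exact hcomm a y
    have hfeq : f = (Action.mkIso (M := Y) (N := W) (e.toFGModuleCatIso : Y.V ≅ W.V) hcomm2).hom := by
      apply Action.hom_ext
      rfl
    rw [hfeq]
    infer_instance

end SubRep

end AuxCharacter

/-- If `G` is almost monomial and `N ⊴ G`, then `G/N` is almost monomial. -/
theorem quotient_almostMonomial (G : Type) [Group G] [Finite G]
    (N : Subgroup G) [N.Normal] (h : IsAlmostMonomialGroup G) :
    IsAlmostMonomialGroup (G ⧸ N) := by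
  intro χ φ hχ hφ hne
  obtain ⟨V, hV, rfl⟩ := hχ
  obtain ⟨V', hV', rfl⟩ := hφ
  set π : G →* G ⧸ N := QuotientGroup.mk' N with hπ
  have hπs : Function.Surjective π := QuotientGroup.mk'_surjective N
  have hχG : IsIrreducibleChar G (fun g => V.character (π g)) :=
    ⟨FDRep.of (V.ρ.comp π), simple_comp π hπs V hV, funext fun _ => rfl⟩
  have hφG : IsIrreducibleChar G (fun g => V'.character (π g)) :=
    ⟨FDRep.of (V'.ρ.comp π), simple_comp π hπs V' hV', funext fun _ => rfl⟩
  have hneG : (fun g => V.character (π g)) ≠ (fun g => V'.character (π g)) := by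
    intro he
    apply hne
    funext x
    obtain ⟨g, rfl⟩ := hπs x
    exact congrFun he g
  obtain ⟨H, lam, hc1, hc2⟩ := h _ _ hχG hφG hneG
  have hclassV : ∀ x g : G, V.character (π (x * g * x⁻¹)) = V.character (π g) := by
    intro x g
    rw [map_mul, map_mul, map_inv, FDRep.char_conj]
  have hclassV' : ∀ x g : G, V'.character (π (x * g * x⁻¹)) = V'.character (π g) := by
    intro x g
    rw [map_mul, map_mul, map_inv, FDRep.char_conj]
  set p : H →* (H.map π) := MonoidHom.subgroupMap π H with hp
  have hps : Function.Surjective p := MonoidHom.subgroupMap_surjective π H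
  have htriv : ∀ k : H, p k = 1 → lam k = 1 := by
    intro k hk
    by_contra hne1
    apply hc1
    show charInner G (indChar H ⇑lam) (fun g => V.character (π g)) = 0
    rw [frobenius_ind H ⇑lam _ hclassV]
    have hπk : π ↑k = 1 := congrArg Subtype.val hk
    refine charInner_hom_eq_zero lam _ k hne1 ?_
    intro a
    show V.character (π ↑(a * k)) = V.character (π ↑a)
    rw [Subgroup.coe_mul, map_mul, hπk, mul_one]
  obtain ⟨lam', hlam'⟩ := exists_descend p hps lam htriv
  have trans : ∀ w : (G ⧸ N) → ℂ, (∀ x g : G ⧸ N, w (x * g * x⁻¹) = w g) →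
      charInner (G ⧸ N) (indChar (H.map π) ⇑lam') w
        = charInner G (indChar H ⇑lam) (fun g => w (π g)) := by
    intro w hw
    rw [frobenius_ind (H.map π) ⇑lam' w hw]
    rw [frobenius_ind H ⇑lam (fun g => w (π g))
      (fun x g => by show w (π (x * g * x⁻¹)) = w (π g); rw [map_mul, map_mul, map_inv]; exact hw _ _)]
    have e1 : charInner H ⇑lam (fun h : H => w (π ↑h))
        = charInner (H.map π) ⇑lam' (fun hb : H.map π => w ↑hb) := by
      rw [← charInner_comp_surj p hps ⇑lam' (fun hb : H.map π => w ↑hb)]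
      congr 1
      funext a
      exact (hlam' a).symm
    exact e1.symm
  refine ⟨H.map π, lam', ?_, ?_⟩
  · show charInner (G ⧸ N) (indChar (H.map π) ⇑lam') V.character ≠ 0
    rw [trans V.character (fun x g => FDRep.char_conj V g x)]
    exact hc1
  · intro hcon
    apply hc2
    show charInner G (indChar H ⇑lam) (fun g => V'.character (π g)) ≠ 0
    rw [← trans V'.character (fun x g => FDRep.char_conj V' g x)]
    exact hcon
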